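/- A charge spectrum w minimally allows the top Yukawa if and only if w.qHd = none, w.Q5 = ∅, and there exists q : ℤ with w.qHu = some q such that either w.Q10 = {a} for some a with a + a = q, or w.Q10 = {a, b} for some a ≠ b with a + b = q. -/

import Mathlib

/-- A charge spectrum for the `SU(5)` model: optional Higgs charges and
finite sets of distinct matter charges. -/
structure ChargeSpectrum where
  qHd : Option ℤ
  qHu : Option ℤ
  Q5 : Finset ℤ
  Q10 : Finset ℤ
deriving DecidableEq

namespace ChargeSpectrum

instance : HasSubset ChargeSpectrum where
  Subset x y :=
    x.qHd.toFinset ⊆ y.qHd.toFinset ∧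
    x.qHu.toFinset ⊆ y.qHu.toFinset ∧
    x.Q5 ⊆ y.Q5 ∧ x.Q10 ⊆ y.Q10

/-- `x` allows the top Yukawa coupling `10 10 5_Hu`. -/
def AllowsTopYukawa (x : ChargeSpectrum) : Prop :=
  ∃ q : ℤ, x.qHu = some q ∧ ∃ q1 ∈ x.Q10, ∃ q2 ∈ x.Q10, q1 + q2 = q

/-- `x` is complete: both Higgs sectors present, both matter sectors nonempty. -/
def IsComplete (x : ChargeSpectrum) : Prop :=
  x.qHd.isSome ∧ x.qHu.isSome ∧ x.Q5 ≠ ∅ ∧ x.Q10 ≠ ∅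

/-- `x` allows at least one of the dangerous operators μ, β, Λ, W1, W2, W4, K1, K2. -/
def IsPhenoConstrained (x : ChargeSpectrum) : Prop :=
  (∃ a : ℤ, x.qHd = some a ∧ x.qHu = some a) ∨
  (∃ b : ℤ, x.qHu = some b ∧ b ∈ x.Q5) ∨
  (∃ q5 ∈ x.Q5, ∃ q5' ∈ x.Q5, ∃ q10 ∈ x.Q10, q5 + q5' + q10 = 0) ∨
  (∃ q10 ∈ x.Q10, ∃ q10' ∈ x.Q10, ∃ q10'' ∈ x.Q10, ∃ q5 ∈ x.Q5,
    q10 + q10' + q10'' + q5 = 0) ∨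
  (∃ a : ℤ, x.qHd = some a ∧ ∃ q10 ∈ x.Q10, ∃ q10' ∈ x.Q10, ∃ q10'' ∈ x.Q10,
    q10 + q10' + q10'' + a = 0) ∨
  (∃ a : ℤ, x.qHd = some a ∧ ∃ b : ℤ, x.qHu = some b ∧ ∃ q5 ∈ x.Q5,
    q5 + a - 2 * b = 0) ∨
  (∃ q10 ∈ x.Q10, ∃ q10' ∈ x.Q10, ∃ q5 ∈ x.Q5, q10 + q10' - q5 = 0) ∨
  (∃ a : ℤ, x.qHd = some a ∧ ∃ b : ℤ, x.qHu = some b ∧ ∃ q10 ∈ x.Q10,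
    a + b + q10 = 0)

/-- `w` minimally allows the top Yukawa: it allows it, but no proper
sub-spectrum does. -/
def MinimallyAllowsTopYukawa (w : ChargeSpectrum) : Prop :=
  AllowsTopYukawa w ∧ ∀ y : ChargeSpectrum, y ⊆ w → y ≠ w → ¬ AllowsTopYukawa y

/-- The bounded class of charge spectra built from the finite charge menus
`S5` and `S10`. -/
def ofFinset (S5 S10 : Finset ℤ) : Finset ChargeSpectrum :=
  ((({none} ∪ S5.image Option.some) ×ˢ ({none} ∪ S5.image Option.some)) ×ˢ
      (S5.powerset ×ˢ S10.powerset)).image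
    fun p => ⟨p.1.1, p.1.2, p.2.1, p.2.2⟩

/-- Insert a charge into the `Q5` sector. -/
def insertQ5 (x : ChargeSpectrum) (q : ℤ) : ChargeSpectrum :=
  ⟨x.qHd, x.qHu, insert q x.Q5, x.Q10⟩

/-- Insert a charge into the `Q10` sector. -/
def insertQ10 (x : ChargeSpectrum) (q : ℤ) : ChargeSpectrum :=
  ⟨x.qHd, x.qHu, x.Q5, insert q x.Q10⟩

/-- `MemV S5 S10 x` says that `x` lies in the least class `V(S5, S10)` generated
from seeds (completions of minimal top-Yukawa witnesses that are not
pheno-constrained) by the `Q5`- and `Q10`-closure moves. -/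
inductive MemV (S5 S10 : Finset ℤ) : ChargeSpectrum → Prop
  | seed (w : ChargeSpectrum) (hw : w ∈ ofFinset S5 S10)
      (hmin : MinimallyAllowsTopYukawa w) (a b : ℤ) (ha : a ∈ S5) (hb : b ∈ S5)
      (hc : ¬ IsPhenoConstrained ⟨some a, w.qHu, {b}, w.Q10⟩) :
      MemV S5 S10 ⟨some a, w.qHu, {b}, w.Q10⟩
  | q5Closure (x : ChargeSpectrum) (hx : MemV S5 S10 x) (q : ℤ) (hq : q ∈ S5)
      (h : ¬ IsPhenoConstrained (insertQ5 x q)) : MemV S5 S10 (insertQ5 x q)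
  | q10Closure (x : ChargeSpectrum) (hx : MemV S5 S10 x) (q : ℤ) (hq : q ∈ S10)
      (h : ¬ IsPhenoConstrained (insertQ10 x q)) : MemV S5 S10 (insertQ10 x q)

end ChargeSpectrum

open ChargeSpectrum in
/-- characterization of minimal top-Yukawa witnesses. -/
theorem minimallyAllowsTopYukawa_iff (w : ChargeSpectrum) :
    MinimallyAllowsTopYukawa w ↔
      w.qHd = none ∧ w.Q5 = ∅ ∧
        ∃ q : ℤ, w.qHu = some q ∧
          ((∃ a : ℤ, w.Q10 = {a} ∧ a + a = q) ∨
            (∃ a b : ℤ, a ≠ b ∧ w.Q10 = {a, b} ∧ a + b = q)) := by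
  have ext : ∀ x y : ChargeSpectrum, x.qHd = y.qHd → x.qHu = y.qHu →
      x.Q5 = y.Q5 → x.Q10 = y.Q10 → x = y := by
    rintro ⟨a, b, c, d⟩ ⟨a', b', c', d'⟩ h1 h2 h3 h4
    simp_all
  constructor
  · rintro ⟨⟨q, hq, q1, hq1, q2, hq2, hsum⟩, hmin⟩
    set y : ChargeSpectrum := ⟨none, some q, ∅, {q1, q2}⟩ with hy
    have hsub : y ⊆ w := by
      refine ⟨by simp [hy, Option.toFinset], ?_, by simp [hy], ?_⟩
      · simp [hy, hq, Option.toFinset]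
      · intro x hx
        simp [hy] at hx
        rcases hx with rfl | rfl <;> assumption
    have heq : y = w := by
      by_contra h
      exact hmin y hsub h ⟨q, rfl, q1, by simp [hy], q2, by simp [hy], hsum⟩
    have h1 : w.qHd = none := by rw [← heq]
    have h2 : w.qHu = some q := hq
    have h3 : w.Q5 = ∅ := by rw [← heq]
    have h4 : w.Q10 = {q1, q2} := by rw [← heq]
    refine ⟨h1, h3, q, h2, ?_⟩
    by_cases hq12 : q1 = q2
    · exact Or.inl ⟨q1, by simp [h4, ← hq12], by rw [← hq12] at hsum; exact hsum⟩
    · exact Or.inr ⟨q1, q2, hq12, h4, hsum⟩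
  · rintro ⟨h1, h3, q, h2, hcase⟩
    constructor
    · rcases hcase with ⟨a, h4, hs⟩ | ⟨a, b, hab, h4, hs⟩
      · exact ⟨q, h2, a, by simp [h4], a, by simp [h4], hs⟩
      · exact ⟨q, h2, a, by simp [h4], b, by simp [h4], hs⟩
    · rintro y ⟨s1, s2, s3, s4⟩ hne ⟨q', hq', r1, hr1, r2, hr2, hsum⟩
      apply hne
      have hy2 : y.qHu = some q := by
        have := s2 (by simp [hq', Option.toFinset] : q' ∈ y.qHu.toFinset)
        rw [h2, Option.toFinset] at this
        simp at this
        rw [hq', this]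
      have hqq' : q' = q := by
        rw [hy2] at hq'; exact (Option.some_injective _ hq').symm
      have hy1 : y.qHd = none := by
        rw [h1] at s1
        rcases hyd : y.qHd with _ | a
        · rfl
        · rw [hyd] at s1
          simpa using s1 (show a ∈ (some a).toFinset by simp)
      have hy3 : y.Q5 = ∅ := by
        rw [h3] at s3
        exact Finset.subset_empty.mp s3
      refine ext y w (hy1.trans h1.symm) (by rw [hy2, h2]) (by rw [hy3, h3]) ?_
      subst hqq'
      rcases hcase with ⟨a, h4, hs⟩ | ⟨a, b, hab, h4, hs⟩
      · rw [h4] at s4 ⊢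
        have := s4 hr1
        simp at this
        apply Finset.eq_singleton_iff_nonempty_unique_mem.mpr
        exact ⟨⟨r1, hr1⟩, fun x hx => by simpa using s4 hx⟩
      · rw [h4] at s4 ⊢
        have m1 := s4 hr1
        have m2 := s4 hr2
        simp at m1 m2
        apply Finset.Subset.antisymm s4
        have key : r1 ≠ r2 := by
          rintro rfl
          rcases m1 with rfl | rfl
          · exact hab (by omega)
          · exact hab (by omega)
        intro x hx
        simp at hx
        rcases m1 with rfl | rfl <;> rcases m2 with rfl | rfl
        · exact absurd rfl key
        · rcases hx with rfl | rfl
          · exact hr1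
          · exact hr2
        · rcases hx with rfl | rfl
          · exact hr2
          · exact hr1
        · exact absurd rfl key
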